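/- arXiv:2102.03043 — 10 statements merged into one kernel-verified Lean document; each statement's English description precedes it below -/
import Mathlib

section
/- Let p : [0,1]^n → [0,1]^n be a regular choice model, i.e., each p_i(x) is non-increasing in x_k for every k ≠ i, and the total sale probability P(x) := Σ_{i=1}^n p_i(x) is non-decreasing in x (coordinatewise). Then for any x ∈ [0,1]^n and any binary vector y ∈ {0,1}^n, one has Σ_i y_i p_i(x) ≤ Σ_i y_i p_i(y). -/
/-- For a regular choice model `p` (each `p i` non-increasing in the
other coordinates, total sale probability non-decreasing), for any `x ∈ [0,1]^n`
and binary `y`, `∑ y i * p x i ≤ ∑ y i * p y i`. -/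
theorem refined_regular_sales_bound (n : ℕ) (p : (Fin n → ℝ) → Fin n → ℝ)
    (hpos : ∀ x i, 0 ≤ p x i)
    (hreg : ∀ x y : Fin n → ℝ, (∀ k, x k ≤ y k) → ∀ i, x i = y i → p y i ≤ p x i)
    (hP : ∀ x y : Fin n → ℝ, (∀ k, x k ≤ y k) → ∑ i, p x i ≤ ∑ i, p y i)
    (x y : Fin n → ℝ) (hx : ∀ i, x i ∈ Set.Icc (0:ℝ) 1)
    (hy : ∀ i, y i = 0 ∨ y i = 1) :
    ∑ i, y i * p x i ≤ ∑ i, y i * p y i := by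
  set z : Fin n → ℝ := fun k => min (x k) (y k) with hz
  have hzx : ∀ k, z k ≤ x k := fun k => min_le_left _ _
  have hzy : ∀ k, z k ≤ y k := fun k => min_le_right _ _
  have hz1 : ∀ i, y i = 1 → z i = x i := by
    intro i h1
    simp only [hz]
    rw [min_eq_left]
    rw [h1]; exact (hx i).2
  have hz0 : ∀ i, y i = 0 → z i = y i := by
    intro i h0
    simp only [hz]
    rw [min_eq_right]
    rw [h0]; exact (hx i).1
  have step1 : ∑ i, y i * p x i ≤ ∑ i, y i * p z i := by
    apply Finset.sum_le_sum
    intro i _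
    rcases hy i with h0 | h1
    · simp [h0]
    · rw [h1, one_mul, one_mul]
      exact hreg z x hzx i (hz1 i h1)
  have step2 : ∑ i, y i * p z i ≤ ∑ i, y i * p y i := by
    have key : ∑ i, p z i ≤ ∑ i, p y i := hP z y hzy
    have comp : ∀ w : Fin n → ℝ, ∑ i, y i * p w i = ∑ i, p w i - ∑ i, (1 - y i) * p w i := by
      intro w
      rw [← Finset.sum_sub_distrib]
      congr 1; ext i; ring
    rw [comp z, comp y]
    have comp2 : ∑ i, (1 - y i) * p y i ≤ ∑ i, (1 - y i) * p z i := by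
      apply Finset.sum_le_sum
      intro i _
      rcases hy i with h0 | h1
      · rw [h0]; simp only [sub_zero, one_mul]
        exact hreg z y hzy i (hz0 i h0)
      · simp [h1]
    linarith
  linarith
end

section
/- For n ≥ 2 and α ∈ (0,1], define ω_n := n − (n−1)·α^{1/(n−1)}. Then ω_n is non-decreasing in n, and ω_n → 1 − ln(α) as n → ∞. -/
open Filter Real

/-- `ω n = n - (n-1) α^{1/(n-1)}` is non-decreasing in `n ≥ 2` and
tends to `1 - ln α` as `n → ∞`, for `α ∈ (0,1]`. -/
theorem omega_monotone_and_limit (α : ℝ) (hα : α ∈ Set.Ioc (0:ℝ) 1) :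
    (∀ n : ℕ, 2 ≤ n →
      (n : ℝ) - ((n : ℝ) - 1) * α ^ ((1 : ℝ) / ((n : ℝ) - 1)) ≤
        ((n : ℝ) + 1) - (n : ℝ) * α ^ ((1 : ℝ) / (n : ℝ))) ∧
    Tendsto (fun n : ℕ => (n : ℝ) - ((n : ℝ) - 1) * α ^ ((1 : ℝ) / ((n : ℝ) - 1)))
      atTop (nhds (1 - Real.log α)) := by
  obtain ⟨hα0, hα1⟩ := hα
  constructor
  · intro n hn
    have hn2 : (2:ℝ) ≤ (n:ℝ) := by exact_mod_cast hn
    set t : ℝ := (n:ℝ) - 1 with htdef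
    have ht1 : (1:ℝ) ≤ t := by simp [htdef]; linarith
    have ht0 : (0:ℝ) < t := by linarith
    have ht10 : (0:ℝ) < t + 1 := by linarith
    have h := convexOn_exp.2 (Set.mem_univ (0:ℝ)) (Set.mem_univ (Real.log α / t))
      (show (0:ℝ) ≤ 1/(t+1) by positivity) (show (0:ℝ) ≤ t/(t+1) by positivity)
      (show 1/(t+1) + t/(t+1) = (1:ℝ) by field_simp; ring)
    simp only [smul_eq_mul, mul_zero, zero_add, Real.exp_zero, mul_one] at h
    have harg : t/(t+1) * (Real.log α / t) = Real.log α * ((1:ℝ)/(t+1)) := by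
      field_simp
    rw [harg] at h
    have e1 : α ^ ((1:ℝ)/(t+1)) = Real.exp (Real.log α * ((1:ℝ)/(t+1))) := by
      rw [Real.rpow_def_of_pos hα0]
    have e2 : α ^ ((1:ℝ)/t) = Real.exp (Real.log α * ((1:ℝ)/t)) := by
      rw [Real.rpow_def_of_pos hα0]
    have hexp : Real.exp (Real.log α / t) = α ^ ((1:ℝ)/t) := by
      rw [e2]; ring_nf
    rw [hexp] at h
    -- h : α ^ (1/(t+1)) ≤ 1/(t+1) + t/(t+1) * α^(1/t)  (after rewriting exp)
    rw [← e1] at h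
    have key : (t+1) * α ^ ((1:ℝ)/(t+1)) ≤ 1 + t * α ^ ((1:ℝ)/t) := by
      have := mul_le_mul_of_nonneg_left h (le_of_lt ht10)
      calc (t+1) * α ^ ((1:ℝ)/(t+1)) ≤ (t+1) * (1/(t+1) + t/(t+1) * α ^ ((1:ℝ)/t)) := this
        _ = 1 + t * α ^ ((1:ℝ)/t) := by field_simp
    have hteq : (n:ℝ) = t + 1 := by simp [htdef]
    rw [hteq]
    linarith [key]
  · rcases eq_or_lt_of_le hα1 with h1 | h1
    · rw [h1]
      have : (fun n : ℕ => (n : ℝ) - ((n : ℝ) - 1) * (1:ℝ) ^ ((1 : ℝ) / ((n : ℝ) - 1)))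
          = fun _ => 1 := by
        funext n; rw [Real.one_rpow]; ring
      rw [this, Real.log_one]
      simp
    · have hc : Real.log α < 0 := Real.log_neg hα0 h1
      have hc0 : Real.log α ≠ 0 := ne_of_lt hc
      have hslope : Tendsto (fun x : ℝ => (Real.exp x - 1) / x) (nhdsWithin 0 {0}ᶜ) (nhds 1) := by
        have h := (Real.hasDerivAt_exp 0)
        rw [hasDerivAt_iff_tendsto_slope] at h
        simp only [Real.exp_zero] at h
        refine h.congr' ?_
        filter_upwards [self_mem_nhdsWithin] with x hx
        simp [slope_def_field, div_eq_mul_inv, mul_comm]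
      have htend : Tendsto (fun n : ℕ => Real.log α / ((n:ℝ) - 1)) atTop (nhdsWithin 0 {0}ᶜ) := by
        rw [tendsto_nhdsWithin_iff]
        constructor
        · apply Tendsto.div_atTop tendsto_const_nhds
          exact tendsto_atTop_add_const_right _ _ tendsto_natCast_atTop_atTop
        · filter_upwards [eventually_ge_atTop 2] with n hn
          have : (0:ℝ) < (n:ℝ) - 1 := by
            have : (2:ℝ) ≤ (n:ℝ) := by exact_mod_cast hn
            linarith
          simp only [Set.mem_compl_iff, Set.mem_singleton_iff]
          exact div_ne_zero hc0 (ne_of_gt this)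
      have hmain : Tendsto (fun n : ℕ =>
          1 - Real.log α * ((Real.exp (Real.log α / ((n:ℝ)-1)) - 1) / (Real.log α / ((n:ℝ)-1))))
          atTop (nhds (1 - Real.log α)) := by
        have := (hslope.comp htend).const_mul (Real.log α)
        simpa using (tendsto_const_nhds (x := (1:ℝ)) (f := atTop (α := ℕ))).sub
          (by simpa using this)
      refine hmain.congr' ?_
      filter_upwards [eventually_ge_atTop 2] with n hn
      have hn2 : (2:ℝ) ≤ (n:ℝ) := by exact_mod_cast hn
      have ht0 : (0:ℝ) < (n:ℝ) - 1 := by linarith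
      have hx0 : Real.log α / ((n:ℝ)-1) ≠ 0 := div_ne_zero hc0 (ne_of_gt ht0)
      have e2 : α ^ ((1:ℝ)/((n:ℝ)-1)) = Real.exp (Real.log α / ((n:ℝ)-1)) := by
        rw [Real.rpow_def_of_pos hα0]; ring_nf
      rw [e2]
      field_simp
      ring
end

section
/- Let r_1 ≥ r_2 ≥ ⋯ ≥ r_n > 0 with r_n/r_1 = α, and set r_{n+1} := 0. Then Σ_{i=1}^n (r_i − r_{i+1})/r_i ≤ n − (n−1)·α^{1/(n−1)}, with equality when r_k = r_1·α^{(k−1)/(n−1)}. -/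
open Finset

lemma prod_telescope_aux (r : ℕ → ℝ) :
    ∀ m : ℕ, (∀ i, 1 ≤ i → i ≤ m + 1 → r i ≠ 0) →
      ∏ i ∈ Icc 1 m, r (i + 1) / r i = r (m + 1) / r 1 := by
  intro m
  induction m with
  | zero =>
      intro h
      simp [div_self (h 1 le_rfl le_rfl)]
  | succ m ih =>
      intro h
      rw [Finset.prod_Icc_succ_top (by omega), ih (fun i h1 h2 => h i h1 (by omega))]
      have h1 : r 1 ≠ 0 := h 1 le_rfl (by omega)
      have h2 : r (m + 1) ≠ 0 := h (m + 1) (by omega) (by omega)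
      field_simp

/-- For `r_1 ≥ … ≥ r_n > 0` with `r_n/r_1 = α` and `r_{n+1} = 0`,
`∑_{i=1}^n (r_i - r_{i+1})/r_i ≤ n - (n-1) α^{1/(n-1)}`, with equality for the
geometric sequence `r_k = r_1 α^{(k-1)/(n-1)}`. -/
theorem revenue_ratio_sum_bound (n : ℕ) (hn : 1 ≤ n) (r : ℕ → ℝ)
    (hpos : ∀ i, 1 ≤ i → i ≤ n → 0 < r i)
    (hmono : ∀ i, 1 ≤ i → i < n → r (i + 1) ≤ r i)
    (hlast : r (n + 1) = 0)
    (α : ℝ) (hα : α = r n / r 1) :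
    (∑ i ∈ Icc 1 n, (r i - r (i + 1)) / r i ≤
        (n : ℝ) - ((n : ℝ) - 1) * α ^ ((1 : ℝ) / ((n : ℝ) - 1))) ∧
    ((∀ k, 1 ≤ k → k ≤ n → r k = r 1 * α ^ (((k : ℝ) - 1) / ((n : ℝ) - 1))) →
      ∑ i ∈ Icc 1 n, (r i - r (i + 1)) / r i =
        (n : ℝ) - ((n : ℝ) - 1) * α ^ ((1 : ℝ) / ((n : ℝ) - 1))) := by
  have hne : ∀ i, 1 ≤ i → i ≤ n → r i ≠ 0 := fun i h1 h2 => (hpos i h1 h2).ne'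
  have hsum : ∑ i ∈ Icc 1 n, (r i - r (i + 1)) / r i
      = (n : ℝ) - ∑ i ∈ Icc 1 n, r (i + 1) / r i := by
    have : ∀ i ∈ Icc 1 n, (r i - r (i + 1)) / r i = 1 - r (i + 1) / r i := by
      intro i hi
      rw [mem_Icc] at hi
      rw [sub_div, div_self (hne i hi.1 hi.2)]
    rw [Finset.sum_congr rfl this, Finset.sum_sub_distrib, Finset.sum_const,
      Nat.card_Icc]
    simp
  rcases eq_or_lt_of_le hn with h1 | h2
  · -- n = 1
    have hn1 : n = 1 := h1.symm
    subst hn1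
    have h2 : r 2 = 0 := hlast
    constructor
    · simp [h2, div_self (hne 1 le_rfl le_rfl)]
    · intro _
      simp [h2, div_self (hne 1 le_rfl le_rfl)]
  · -- n ≥ 2
    obtain ⟨m, rfl⟩ : ∃ m, n = m + 1 := ⟨n - 1, by omega⟩
    have hm : 1 ≤ m := by omega
    have hmpos : (0 : ℝ) < m := by exact_mod_cast hm
    have hcast : ((m + 1 : ℕ) : ℝ) - 1 = (m : ℝ) := by push_cast; ring
    have hαpos : 0 < α := by
      rw [hα]
      exact div_pos (hpos (m + 1) (by omega) le_rfl) (hpos 1 le_rfl (by omega))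
    have hsplit : ∑ i ∈ Icc 1 (m + 1), r (i + 1) / r i
        = ∑ i ∈ Icc 1 m, r (i + 1) / r i := by
      rw [Finset.sum_Icc_succ_top (by omega), hlast]
      simp
    have hprod : ∏ i ∈ Icc 1 m, r (i + 1) / r i = α := by
      rw [prod_telescope_aux r m (fun i h1 h2 => hne i h1 (by omega)), hα]
    have hznn : ∀ i ∈ Icc 1 m, (0 : ℝ) ≤ r (i + 1) / r i := by
      intro i hi
      rw [mem_Icc] at hi
      exact div_nonneg (hpos (i + 1) (by omega) (by omega)).le
        (hpos i hi.1 (by omega)).le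
    constructor
    · -- inequality
      have amgm := Real.geom_mean_le_arith_mean_weighted (Icc 1 m)
        (fun _ => (m : ℝ)⁻¹) (fun i => r (i + 1) / r i)
        (fun i _ => by positivity)
        (by rw [Finset.sum_const, Nat.card_Icc, Nat.add_sub_cancel, nsmul_eq_mul]
            exact mul_inv_cancel₀ hmpos.ne')
        hznn
      rw [Real.finset_prod_rpow _ _ hznn, hprod] at amgm
      rw [← Finset.mul_sum] at amgm
      have key : (m : ℝ) * α ^ ((m : ℝ))⁻¹ ≤ ∑ i ∈ Icc 1 m, r (i + 1) / r i := by
        calc (m : ℝ) * α ^ ((m : ℝ))⁻¹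
            ≤ (m : ℝ) * ((m : ℝ)⁻¹ * ∑ i ∈ Icc 1 m, r (i + 1) / r i) :=
              mul_le_mul_of_nonneg_left amgm hmpos.le
          _ = ∑ i ∈ Icc 1 m, r (i + 1) / r i := by field_simp
      rw [hsum, hsplit, hcast, one_div]
      linarith
    · -- equality
      intro heq
      have hterm : ∀ i ∈ Icc 1 m, r (i + 1) / r i = α ^ ((1 : ℝ) / (m : ℝ)) := by
        intro i hi
        rw [mem_Icc] at hi
        have e1 := heq (i + 1) (by omega) (by omega)
        have e2 := heq i hi.1 (by omega)
        rw [e1, e2, hcast]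
        have h1 : r 1 ≠ 0 := hne 1 le_rfl (by omega)
        rw [mul_div_mul_left _ _ h1, ← Real.rpow_sub hαpos]
        congr 1
        have : ((i + 1 : ℕ) : ℝ) = (i : ℝ) + 1 := by push_cast; ring
        rw [this]
        field_simp
        ring
      rw [hsum, hsplit, Finset.sum_congr rfl hterm, Finset.sum_const, Nat.card_Icc,
        hcast, one_div]
      push_cast
      ring_nf
end

section
/- Consider m customer segments with weights θ_j ≥ 0 summing to 1, each with a regular choice model p^j on n products, and revenues r_1 ≥ r_2 ≥ ⋯ ≥ r_n > 0 with r_{n+1} := 0 and α := r_n/r_1. Let e^i ∈ {0,1}^n denote the vector with first i coordinates equal to 1, let R(x) := Σ_j θ_j Σ_i r_i p^j_i(x), and let R^o := max_{1≤i≤n} R(e^i) be the best revenue-ordered assortment revenue. Then the personalized refined optimum R̄^p := Σ_j θ_j · max_{x ∈ [0,1]^n} Σ_i r_i p^j_i(x) satisfies R̄^p ≤ ω_n · R^o, where ω_n = n − (n−1)α^{1/(n−1)}. -/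
open Finset

lemma rco_tel_sum (f : ℕ → ℝ) : ∀ a b : ℕ, a ≤ b →
    ∑ l ∈ Icc (a+1) b, (f (l-1) - f l) = f a - f b := by
  intro a b hab
  induction b, hab using Nat.le_induction with
  | base => simp
  | succ b hab ih =>
    rw [Finset.sum_Icc_succ_top (by omega), ih]
    simp

lemma rco_tel_prod (g : ℕ → ℝ) (hg : ∀ i, g i ≠ 0) :
    ∀ k, ∏ i ∈ range k, (g (i+1) / g i) = g k / g 0 := by
  intro k
  induction k with
  | zero => simp [div_self (hg 0)]
  | succ k ih =>
    rw [Finset.prod_range_succ, ih]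
    rw [div_mul_div_comm, mul_comm (g k), mul_div_mul_right _ _ (hg k)]

/-- Key lemma: truncated sum of a regular choice model at any `x ∈ [0,1]^n`
is at most its value at the binary vector `e^l`. -/
lemma rco_key (n : ℕ) (q : (Fin n → ℝ) → Fin n → ℝ)
    (hreg : ∀ (x y : Fin n → ℝ), (∀ k, x k ≤ y k) → ∀ i, x i = y i → q y i ≤ q x i)
    (hP : ∀ (x y : Fin n → ℝ), (∀ k, x k ≤ y k) → ∑ i, q x i ≤ ∑ i, q y i)
    (x : Fin n → ℝ) (hx0 : ∀ i, 0 ≤ x i) (hx1 : ∀ i, x i ≤ 1) (l : ℕ) :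
    ∑ i ∈ univ.filter (fun i : Fin n => (i:ℕ) < l), q x i ≤
    ∑ i ∈ univ.filter (fun i : Fin n => (i:ℕ) < l),
      q (fun k => if (k:ℕ) < l then 1 else 0) i := by
  set el : Fin n → ℝ := fun k => if (k:ℕ) < l then (1:ℝ) else 0 with hel
  set z : Fin n → ℝ := fun k => if (k:ℕ) < l then x k else 0 with hz
  have hzx : ∀ k, z k ≤ x k := by
    intro k; simp only [hz]; split <;> simp [hx0 k]
  have hzel : ∀ k, z k ≤ el k := by
    intro k; simp only [hz, hel]; split <;> simp [hx1 k]
  have step1 : ∑ i ∈ univ.filter (fun i : Fin n => (i:ℕ) < l), q x i ≤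
      ∑ i ∈ univ.filter (fun i : Fin n => (i:ℕ) < l), q z i := by
    refine Finset.sum_le_sum fun i hi => ?_
    have hil : (i:ℕ) < l := by simpa using hi
    exact hreg z x hzx i (by simp [hz, hil])
  have htot : ∑ i, q z i ≤ ∑ i, q el i := hP z el hzel
  have hcomp : ∑ i ∈ univ.filter (fun i : Fin n => ¬ (i:ℕ) < l), q el i ≤
      ∑ i ∈ univ.filter (fun i : Fin n => ¬ (i:ℕ) < l), q z i := by
    refine Finset.sum_le_sum fun i hi => ?_
    have hil : ¬ (i:ℕ) < l := by simpa using hi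
    exact hreg z el hzel i (by simp [hz, hel, hil])
  have hsplitz := Finset.sum_filter_add_sum_filter_not univ (fun i : Fin n => (i:ℕ) < l) (q z)
  have hsplite := Finset.sum_filter_add_sum_filter_not univ (fun i : Fin n => (i:ℕ) < l) (q el)
  linarith

/-- Extended revenue vector, `0` beyond `n`. -/
noncomputable def rco_rext (n : ℕ) (r : Fin n → ℝ) (l : ℕ) : ℝ :=
  if h : l < n then r ⟨l, h⟩ else 0

/-- Abel summation identity for revenues. -/
lemma rco_abel (n : ℕ) (r : Fin n → ℝ) (q : Fin n → ℝ) :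
    ∑ l ∈ Icc 1 n, (rco_rext n r (l-1) - rco_rext n r l) *
      ∑ i ∈ univ.filter (fun i : Fin n => (i:ℕ) < l), q i
    = ∑ i, r i * q i := by
  have h1 : ∀ l, ∑ i ∈ univ.filter (fun i : Fin n => (i:ℕ) < l), q i
      = ∑ i : Fin n, if (i:ℕ) < l then q i else 0 := fun l => Finset.sum_filter _ _
  simp_rw [h1, Finset.mul_sum]
  rw [Finset.sum_comm]
  refine Finset.sum_congr rfl fun i _ => ?_
  have h2 : ∀ l, (rco_rext n r (l-1) - rco_rext n r l) * (if (i:ℕ) < l then q i else 0)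
      = if (i:ℕ) < l then (rco_rext n r (l-1) - rco_rext n r l) * q i else 0 := by
    intro l; split <;> simp
  simp_rw [h2]
  rw [← Finset.sum_filter]
  have h3 : Finset.filter (fun l => (i:ℕ) < l) (Icc 1 n) = Icc ((i:ℕ)+1) n := by
    ext l
    simp only [Finset.mem_filter, Finset.mem_Icc]
    omega
  rw [h3, ← Finset.sum_mul, rco_tel_sum (rco_rext n r) i n i.isLt.le]
  simp [rco_rext, i.isLt]

/-- The scalar bound `∑ (r_{l-1}-r_l)/r_{l-1} ≤ ω_n`. -/
lemma rco_omega (n : ℕ) (hn : 1 ≤ n) (r : Fin n → ℝ) (rpos : ∀ i, 0 < r i)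
    (α : ℝ) (hα : α = r ⟨n - 1, Nat.sub_lt hn Nat.one_pos⟩ / r ⟨0, Nat.lt_of_lt_of_le Nat.one_pos hn⟩) :
    ∑ l ∈ Icc 1 n, (rco_rext n r (l-1) - rco_rext n r l) / rco_rext n r (l-1)
      ≤ (n : ℝ) - ((n : ℝ) - 1) * α ^ ((1 : ℝ) / ((n : ℝ) - 1)) := by
  have hrxpos : ∀ k, k < n → 0 < rco_rext n r k := by
    intro k hk; simp only [rco_rext, dif_pos hk]; exact rpos _
  have hstep : ∀ l ∈ Icc 1 n,
      (rco_rext n r (l-1) - rco_rext n r l) / rco_rext n r (l-1)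
        = 1 - rco_rext n r l / rco_rext n r (l-1) := by
    intro l hl
    rw [Finset.mem_Icc] at hl
    have h : rco_rext n r (l-1) ≠ 0 := (hrxpos (l-1) (by omega)).ne'
    rw [sub_div, div_self h]
  rw [Finset.sum_congr rfl hstep, Finset.sum_sub_distrib, Finset.sum_const,
    Nat.card_Icc]
  simp only [Nat.add_sub_cancel, nsmul_eq_mul, mul_one]
  have hins : Icc 1 n = insert n (Icc 1 (n-1)) := by
    ext l; simp only [Finset.mem_Icc, Finset.mem_insert]; omega
  have hnot : n ∉ Icc 1 (n-1) := by simp; omega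
  rw [hins, Finset.sum_insert hnot]
  have hzero : rco_rext n r n / rco_rext n r (n-1) = 0 := by
    simp [rco_rext]
  rw [hzero, zero_add]
  have hicoeq : Icc 1 (n-1) = Ico 1 n := by ext l; simp [Finset.mem_Icc, Finset.mem_Ico]; omega
  rw [hicoeq, Finset.sum_Ico_eq_sum_range]
  have key : ((n : ℝ) - 1) * α ^ ((1 : ℝ) / ((n : ℝ) - 1)) ≤
      ∑ k ∈ range (n-1), rco_rext n r (1+k) / rco_rext n r (1+k-1) := by
    rcases eq_or_lt_of_le hn with h1 | h2
    · simp [← h1]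
    · -- n ≥ 2
      set N := n - 1 with hN
      have hN1 : 1 ≤ N := by omega
      have hNc : ((n : ℝ) - 1) = (N : ℝ) := by
        have : (n:ℝ) = ((N+1 : ℕ) : ℝ) := by rw [show N+1 = n by omega]
        rw [this]; push_cast; ring
      set g : ℕ → ℝ := fun k => r ⟨min k (n-1), by omega⟩ with hg
      have hgpos : ∀ k, 0 < g k := fun k => rpos _
      have hgval : ∀ k ≤ n - 1, g k = rco_rext n r k := by
        intro k hk
        simp only [hg, rco_rext, dif_pos (show k < n by omega)]
        congr 1
        exact Fin.ext (by simp; omega)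
      have hteq : ∀ k ∈ range N, rco_rext n r (1+k) / rco_rext n r (1+k-1)
          = g (k+1) / g k := by
        intro k hk
        rw [Finset.mem_range] at hk
        rw [hgval (k+1) (by omega), hgval k (by omega)]
        congr 2 <;> omega
      rw [Finset.sum_congr rfl hteq]
      have hprod : ∏ k ∈ range N, (g (k+1) / g k) = α := by
        rw [rco_tel_prod g (fun k => (hgpos k).ne') N, hα]
        congr 2
        · simp only [hg]; congr 1; exact Fin.ext (by simp [hN])
      have hw : ∀ k ∈ range N, (0:ℝ) ≤ 1 / (N:ℝ) := by
        intro k _; positivity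
      have hw' : ∑ _k ∈ range N, (1:ℝ) / (N:ℝ) = 1 := by
        rw [Finset.sum_const, Finset.card_range, nsmul_eq_mul]
        field_simp
      have hz : ∀ k ∈ range N, (0:ℝ) ≤ g (k+1) / g k := by
        intro k _; exact div_nonneg (hgpos _).le (hgpos _).le
      have hamgm := Real.geom_mean_le_arith_mean_weighted (range N)
        (fun _ => 1 / (N:ℝ)) (fun k => g (k+1) / g k) hw hw' hz
      rw [Real.finset_prod_rpow _ _ hz, hprod] at hamgm
      have hexp : ((1:ℝ)/((n:ℝ)-1)) = 1/(N:ℝ) := by rw [hNc]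
      rw [hexp, hNc]
      calc (N:ℝ) * α ^ ((1:ℝ)/(N:ℝ))
          ≤ (N:ℝ) * ∑ k ∈ range N, (1/(N:ℝ)) * (g (k+1) / g k) := by
            apply mul_le_mul_of_nonneg_left hamgm (by positivity)
        _ = ∑ k ∈ range N, g (k+1) / g k := by
            rw [← Finset.mul_sum, ← mul_assoc, mul_one_div,
              div_self (Nat.cast_ne_zero.mpr (by omega : N ≠ 0)), one_mul]
  linarith

/-- For regular segment choice models `p j`, mixture weights `θ`, and
sorted revenues `r`, any personalized refined assortment (one level vector
`x j ∈ [0,1]^n` per segment) earns at most `ω_n` times the best revenue-ordered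
assortment revenue, where `ω_n = n - (n-1) α^{1/(n-1)}` and `α = r_n / r_1`. -/
theorem personalized_refined_vs_revenue_ordered (n m : ℕ) (hn : 1 ≤ n)
    (θ : Fin m → ℝ) (hθ : ∀ j, 0 ≤ θ j) (hθsum : ∑ j, θ j = 1)
    (p : Fin m → (Fin n → ℝ) → Fin n → ℝ)
    (hpos : ∀ j x i, 0 ≤ p j x i)
    (hsub : ∀ j x, ∑ i, p j x i ≤ 1)
    (hreg : ∀ j (x y : Fin n → ℝ), (∀ k, x k ≤ y k) → ∀ i, x i = y i →
      p j y i ≤ p j x i)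
    (hP : ∀ j (x y : Fin n → ℝ), (∀ k, x k ≤ y k) → ∑ i, p j x i ≤ ∑ i, p j y i)
    (r : Fin n → ℝ) (rpos : ∀ i, 0 < r i)
    (rmono : ∀ i k : Fin n, i ≤ k → r k ≤ r i)
    (α : ℝ) (hα : α = r ⟨n - 1, by omega⟩ / r ⟨0, by omega⟩)
    (x : Fin m → Fin n → ℝ) (hx : ∀ j i, x j i ∈ Set.Icc (0:ℝ) 1) :
    ∑ j, θ j * ∑ i, r i * p j (x j) i ≤
      ((n : ℝ) - ((n : ℝ) - 1) * α ^ ((1 : ℝ) / ((n : ℝ) - 1))) *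
        (Icc 1 n).sup' (Finset.nonempty_Icc.mpr hn)
          (fun l => ∑ j, θ j * ∑ i, r i *
            p j (fun k => if (k : ℕ) < l then 1 else 0) i) := by
  have hx0 : ∀ j i, 0 ≤ x j i := fun j i => (hx j i).1
  have hx1 : ∀ j i, x j i ≤ 1 := fun j i => (hx j i).2
  set Ro := (Icc 1 n).sup' (Finset.nonempty_Icc.mpr hn)
      (fun l => ∑ j, θ j * ∑ i, r i *
        p j (fun k => if (k : ℕ) < l then 1 else 0) i) with hRo
  have hrxpos : ∀ k, k < n → 0 < rco_rext n r k := by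
    intro k hk; simp only [rco_rext, dif_pos hk]; exact rpos _
  have hrxval : ∀ k (h : k < n), rco_rext n r k = r ⟨k, h⟩ := by
    intro k hk; simp [rco_rext, hk]
  -- nonnegativity of d
  have hd : ∀ l ∈ Icc 1 n, 0 ≤ rco_rext n r (l-1) - rco_rext n r l := by
    intro l hl
    rw [Finset.mem_Icc] at hl
    rcases lt_or_ge l n with h | h
    · rw [hrxval (l-1) (by omega), hrxval l h, sub_nonneg]
      exact rmono ⟨l-1, by omega⟩ ⟨l, h⟩ (Fin.mk_le_mk.mpr (by omega))
    · have : rco_rext n r l = 0 := by simp [rco_rext]; omega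
      rw [this, sub_zero]
      exact (hrxpos (l-1) (by omega)).le
  -- nonnegativity of Ro
  have hRevNonneg : ∀ l, 0 ≤ ∑ j, θ j * ∑ i, r i *
      p j (fun k => if (k : ℕ) < l then 1 else 0) i := by
    intro l
    refine Finset.sum_nonneg fun j _ => mul_nonneg (hθ j) ?_
    exact Finset.sum_nonneg fun i _ => mul_nonneg (rpos i).le (hpos _ _ _)
  have hRo0 : 0 ≤ Ro := by
    refine le_trans (hRevNonneg n) ?_
    exact Finset.le_sup' (fun l => ∑ j, θ j * ∑ i, r i *
      p j (fun k => if (k : ℕ) < l then 1 else 0) i) (Finset.mem_Icc.mpr ⟨hn, le_refl n⟩)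
  calc ∑ j, θ j * ∑ i, r i * p j (x j) i
      = ∑ j, θ j * ∑ l ∈ Icc 1 n, (rco_rext n r (l-1) - rco_rext n r l) *
          ∑ i ∈ univ.filter (fun i : Fin n => (i:ℕ) < l), p j (x j) i := by
        exact Finset.sum_congr rfl fun j _ => by rw [rco_abel]
    _ ≤ ∑ j, θ j * ∑ l ∈ Icc 1 n, (rco_rext n r (l-1) - rco_rext n r l) *
          ∑ i ∈ univ.filter (fun i : Fin n => (i:ℕ) < l),
            p j (fun k => if (k:ℕ) < l then 1 else 0) i := by
        refine Finset.sum_le_sum fun j _ => mul_le_mul_of_nonneg_left ?_ (hθ j)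
        refine Finset.sum_le_sum fun l hl => mul_le_mul_of_nonneg_left ?_ (hd l hl)
        exact rco_key n (p j) (hreg j) (hP j) (x j) (hx0 j) (hx1 j) l
    _ = ∑ l ∈ Icc 1 n, ∑ j, θ j * ((rco_rext n r (l-1) - rco_rext n r l) *
          ∑ i ∈ univ.filter (fun i : Fin n => (i:ℕ) < l),
            p j (fun k => if (k:ℕ) < l then 1 else 0) i) := by
        simp_rw [Finset.mul_sum]
        exact Finset.sum_comm
    _ ≤ ∑ l ∈ Icc 1 n, ((rco_rext n r (l-1) - rco_rext n r l) / rco_rext n r (l-1)) * Ro := by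
        refine Finset.sum_le_sum fun l hl => ?_
        have hlmem := Finset.mem_Icc.mp hl
        have hln : l - 1 < n := by omega
        have ha : 0 < rco_rext n r (l-1) := hrxpos _ hln
        -- bound: a * Q ≤ Ro, where Q = ∑ j θ j * S
        have hQR : rco_rext n r (l-1) * (∑ j, θ j *
            ∑ i ∈ univ.filter (fun i : Fin n => (i:ℕ) < l),
              p j (fun k => if (k:ℕ) < l then 1 else 0) i) ≤ Ro := by
          have h1 : rco_rext n r (l-1) * (∑ j, θ j *
              ∑ i ∈ univ.filter (fun i : Fin n => (i:ℕ) < l),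
                p j (fun k => if (k:ℕ) < l then 1 else 0) i)
              ≤ ∑ j, θ j * ∑ i, r i * p j (fun k => if (k:ℕ) < l then 1 else 0) i := by
            rw [Finset.mul_sum]
            refine Finset.sum_le_sum fun j _ => ?_
            rw [mul_left_comm]
            refine mul_le_mul_of_nonneg_left ?_ (hθ j)
            calc rco_rext n r (l-1) * ∑ i ∈ univ.filter (fun i : Fin n => (i:ℕ) < l),
                  p j (fun k => if (k:ℕ) < l then 1 else 0) i
                = ∑ i ∈ univ.filter (fun i : Fin n => (i:ℕ) < l),
                  rco_rext n r (l-1) * p j (fun k => if (k:ℕ) < l then 1 else 0) i := by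
                  rw [Finset.mul_sum]
              _ ≤ ∑ i ∈ univ.filter (fun i : Fin n => (i:ℕ) < l),
                  r i * p j (fun k => if (k:ℕ) < l then 1 else 0) i := by
                  refine Finset.sum_le_sum fun i hi => ?_
                  have hil : (i:ℕ) < l := by simpa using hi
                  refine mul_le_mul_of_nonneg_right ?_ (hpos _ _ _)
                  rw [hrxval (l-1) hln]
                  exact rmono i ⟨l-1, hln⟩ (by simp [Fin.le_def]; omega)
              _ ≤ ∑ i, r i * p j (fun k => if (k:ℕ) < l then 1 else 0) i := by
                  refine Finset.sum_le_sum_of_subset_of_nonneg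
                    (Finset.filter_subset _ _) fun i _ _ => ?_
                  exact mul_nonneg (rpos i).le (hpos _ _ _)
          exact le_trans h1 (Finset.le_sup' (fun l => ∑ j, θ j * ∑ i, r i *
            p j (fun k => if (k : ℕ) < l then 1 else 0) i) hl)
        have heq : ((rco_rext n r (l-1) - rco_rext n r l) / rco_rext n r (l-1)) *
              (rco_rext n r (l-1) * (∑ j, θ j *
                ∑ i ∈ univ.filter (fun i : Fin n => (i:ℕ) < l),
                  p j (fun k => if (k:ℕ) < l then 1 else 0) i))
            = ∑ j, θ j * ((rco_rext n r (l-1) - rco_rext n r l) *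
            ∑ i ∈ univ.filter (fun i : Fin n => (i:ℕ) < l),
              p j (fun k => if (k:ℕ) < l then 1 else 0) i) := by
          rw [← mul_assoc, div_mul_cancel₀ _ ha.ne', Finset.mul_sum]
          exact Finset.sum_congr rfl fun j _ => by ring
        rw [← heq]
        exact mul_le_mul_of_nonneg_left hQR (div_nonneg (hd l hl) ha.le)
    _ = (∑ l ∈ Icc 1 n, (rco_rext n r (l-1) - rco_rext n r l) / rco_rext n r (l-1)) * Ro := by
        rw [Finset.sum_mul]
    _ ≤ ((n : ℝ) - ((n : ℝ) - 1) * α ^ ((1 : ℝ) / ((n : ℝ) - 1))) * Ro := by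
        exact mul_le_mul_of_nonneg_right (rco_omega n hn r rpos α hα) hRo0
end

section
/- For the MNL model with attraction values v_0 > 0 and v_i = exp(u_i) > 0, the optimal traditional assortment revenue R*(v) := max_{x ∈ {0,1}^n} Σ_i r_i v_i x_i / (v_0 + Σ_k v_k x_k) is non-decreasing in each v_i (with r_i ≥ 0 fixed). Equivalently, the MNL satisfies the monotone-utility property. -/
open Finset

/-- The MNL optimal traditional assortment revenue is non-decreasing
in the attraction values `v_i` (monotone-utility property of the MNL). -/
theorem mnl_monotone_utility (n : ℕ) (r : Fin n → ℝ) (hr : ∀ i, 0 ≤ r i)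
    (v0 : ℝ) (hv0 : 0 < v0)
    (v w : Fin n → ℝ) (hv : ∀ i, 0 < v i) (hw : ∀ i, 0 < w i)
    (hvw : ∀ i, v i ≤ w i) :
    (univ : Finset (Fin n → Bool)).sup' univ_nonempty
        (fun x => (∑ i, if x i then r i * v i else 0) /
          (v0 + ∑ i, if x i then v i else 0)) ≤
      (univ : Finset (Fin n → Bool)).sup' univ_nonempty
        (fun x => (∑ i, if x i then r i * w i else 0) /
          (v0 + ∑ i, if x i then w i else 0)) := by
  apply Finset.sup'_le
  intro x _
  have hden : ∀ (u : Fin n → ℝ), (∀ i, 0 < u i) → ∀ (y : Fin n → Bool),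
      0 < v0 + ∑ i, if y i then u i else 0 := by
    intro u hu y
    have h : 0 ≤ ∑ i, if y i then u i else 0 :=
      Finset.sum_nonneg fun i _ => by split <;> [exact (hu i).le; rfl]
    linarith
  set R := (∑ i, if x i then r i * v i else 0) / (v0 + ∑ i, if x i then v i else 0) with hR
  have hRnn : 0 ≤ R := by
    apply div_nonneg
    · exact Finset.sum_nonneg fun i _ => by
        split <;> [exact mul_nonneg (hr i) (hv i).le; rfl]
    · exact (hden v hv x).le
  set x' : Fin n → Bool := fun i => x i && decide (R ≤ r i) with hx'
  have hx'iff : ∀ i, x' i = true ↔ (x i = true ∧ R ≤ r i) := by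
    intro i; simp [hx']
  have h1 : ∑ i, (if x i then r i * v i else 0)
      = R * (v0 + ∑ i, if x i then v i else 0) := by
    rw [hR, div_mul_cancel₀ _ (hden v hv x).ne']
  have h2 : R * v0 = ∑ i, (if x i then (r i - R) * v i else 0) := by
    have e : ∑ i, (if x i then (r i - R) * v i else 0)
        = (∑ i, if x i then r i * v i else 0) - R * (∑ i, if x i then v i else 0) := by
      rw [Finset.mul_sum, ← Finset.sum_sub_distrib]
      exact Finset.sum_congr rfl fun i _ => by split <;> ring
    rw [e, h1]; ring
  have h3 : ∑ i, (if x i then (r i - R) * v i else 0)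
      ≤ ∑ i, (if x' i then (r i - R) * v i else 0) := by
    apply Finset.sum_le_sum
    intro i _
    by_cases hxi : x i = true
    · by_cases hri : R ≤ r i
      · have : x' i = true := (hx'iff i).mpr ⟨hxi, hri⟩
        simp [hxi, this]
      · have hx'i : x' i = false := by
          simp [hx', hxi, hri]
        simp only [hxi, hx'i, if_true, if_false, Bool.false_eq_true]
        nlinarith [hv i, not_le.mp hri]
    · have hx'i : x' i = false := by simp [hx', hxi]
      simp [hxi, hx'i]
  have h4 : ∑ i, (if x' i then (r i - R) * v i else 0)
      ≤ ∑ i, (if x' i then (r i - R) * w i else 0) := by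
    apply Finset.sum_le_sum
    intro i _
    by_cases hxi : x' i = true
    · simp only [hxi, if_true]
      have hri : R ≤ r i := ((hx'iff i).mp hxi).2
      exact mul_le_mul_of_nonneg_left (hvw i) (by linarith)
    · simp [hxi]
  have key : R * (v0 + ∑ i, if x' i then w i else 0)
      ≤ ∑ i, if x' i then r i * w i else 0 := by
    have e : ∑ i, (if x' i then (r i - R) * w i else 0)
        = (∑ i, if x' i then r i * w i else 0) - R * (∑ i, if x' i then w i else 0) := by
      rw [Finset.mul_sum, ← Finset.sum_sub_distrib]
      exact Finset.sum_congr rfl fun i _ => by split <;> ring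
    have := h2.le.trans (h3.trans h4)
    rw [e] at this
    linarith
  have hfin : R ≤ (∑ i, if x' i then r i * w i else 0) /
      (v0 + ∑ i, if x' i then w i else 0) :=
    (le_div_iff₀ (hden w hw x')).mpr key
  exact hfin.trans (Finset.le_sup'
    (fun y : Fin n → Bool => (∑ i, if y i then r i * w i else 0) /
      (v0 + ∑ i, if y i then w i else 0)) (Finset.mem_univ x'))
end

section
/- Let λ_1, …, λ_n ∈ (0,1). Define f(1) := 0 and f(k) := (1 − λ_k)(λ_{k−1} + f(k−1)) for k ≥ 2; define f̂(1) := 0 and f̂(k) := (1 − λ_{k+1})(λ_k + f̂(k−1)) for k ≥ 2. Then for all k ≥ 2: f(k) = f̂(k−1) + λ_1 · Π_{j=2}^k (1 − λ_j). -/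
open Finset

/-- For `λ_1,…,λ_n ∈ (0,1)` and the recursions
`f(1)=0, f(k)=(1-λ_k)(λ_{k-1}+f(k-1))` and
`f̂(1)=0, f̂(k)=(1-λ_{k+1})(λ_k+f̂(k-1))`, one has
`f(k) = f̂(k-1) + λ_1 ∏_{j=2}^k (1-λ_j)` for all `2 ≤ k ≤ n`. -/
theorem f_fhat_relation (n : ℕ) (l : ℕ → ℝ)
    (hl : ∀ i, 1 ≤ i → i ≤ n → l i ∈ Set.Ioo (0:ℝ) 1)
    (f fhat : ℕ → ℝ) (hf1 : f 1 = 0) (hfhat1 : fhat 1 = 0)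
    (hf : ∀ k, 2 ≤ k → k ≤ n → f k = (1 - l k) * (l (k - 1) + f (k - 1)))
    (hfhat : ∀ k, 2 ≤ k → k ≤ n → fhat k = (1 - l (k + 1)) * (l k + fhat (k - 1))) :
    ∀ k, 2 ≤ k → k ≤ n →
      f k = fhat (k - 1) + l 1 * ∏ j ∈ Icc 2 k, (1 - l j) := by
  intro k hk
  induction k, hk using Nat.le_induction with
  | base =>
    intro hn
    rw [hf 2 (by norm_num) hn, hf1, hfhat1]
    simp [Finset.Icc_self]
    ring
  | succ k hk ih =>
    intro hn
    have hkn : k ≤ n := by omega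
    rw [hf (k + 1) (by omega) hn]
    simp only [Nat.add_sub_cancel]
    rw [ih hkn, hfhat k hk hkn, Finset.prod_Icc_succ_top (by omega : 2 ≤ k + 1)]
    ring
end

section
/- Let 0 ≤ r_1 ≤ r_2 ≤ ⋯ ≤ r_n and λ_1, …, λ_n ∈ (0,1). Define H_0 := 0, H_k := H_{k−1} + λ_k(r_k − H_{k−1}) for k = 1,…,n, and G_0 := 0, G_k := G_{k−1} + λ_{n+1−k}·max(r_{n+1−k} − G_{k−1}, 0) for k = 1,…,n; set G_n as the final value. Then H_n ≤ (2 − λ_n)·G_n; in particular H_n ≤ 2·G_n. -/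
/-- In the RCS model with revenues `0 ≤ r_1 ≤ … ≤ r_n` and attention
probabilities `λ_i ∈ (0,1)`, the best-order optimal revenue `H_n` and worst-order
optimal revenue `G_n` satisfy `H_n ≤ (2 - λ_n) G_n ≤ 2 G_n`. -/
theorem rcs_factor_two (n : ℕ) (hn : 1 ≤ n) (r l : ℕ → ℝ)
    (hr0 : ∀ i, 1 ≤ i → i ≤ n → 0 ≤ r i)
    (hrmono : ∀ i, 1 ≤ i → i < n → r i ≤ r (i + 1))
    (hl : ∀ i, 1 ≤ i → i ≤ n → l i ∈ Set.Ioo (0:ℝ) 1)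
    (H G : ℕ → ℝ) (hH0 : H 0 = 0) (hG0 : G 0 = 0)
    (hH : ∀ k, 1 ≤ k → k ≤ n → H k = H (k - 1) + l k * (r k - H (k - 1)))
    (hG : ∀ k, 1 ≤ k → k ≤ n →
      G k = G (k - 1) + l (n + 1 - k) * max (r (n + 1 - k) - G (k - 1)) 0) :
    H n ≤ (2 - l n) * G n ∧ H n ≤ 2 * G n := by
  -- Basic bounds on H : 0 ≤ H m and H m ≤ r m for 1 ≤ m
  have key : ∀ m, m ≤ n → 0 ≤ H m ∧ (1 ≤ m → H m ≤ r m) := by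
    intro m
    induction m with
    | zero =>
      intro _
      refine ⟨le_of_eq hH0.symm, ?_⟩
      intro h; exact absurd h (by omega)
    | succ m ih =>
      intro hmn
      have ih' := ih (by omega)
      have hHm0 : 0 ≤ H m := ih'.1
      have hHmr : H m ≤ r (m + 1) := by
        rcases Nat.eq_zero_or_pos m with h0 | h1
        · subst h0; rw [hH0]; exact hr0 1 le_rfl (by omega)
        · exact le_trans (ih'.2 h1) (hrmono m h1 (by omega))
      obtain ⟨hl0, hl1⟩ := hl (m + 1) (by omega) hmn
      have hHrec := hH (m + 1) (by omega) hmn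
      simp only [Nat.add_sub_cancel] at hHrec
      have hr1 : 0 ≤ r (m + 1) := hr0 (m + 1) (by omega) hmn
      constructor
      · nlinarith
      · intro _; nlinarith
  -- G is monotone
  have Gstep : ∀ k, 1 ≤ k → k ≤ n → G (k - 1) ≤ G k := by
    intro k hk1 hkn
    have hGr := hG k hk1 hkn
    obtain ⟨hl0, _⟩ := hl (n + 1 - k) (by omega) (by omega)
    have hmax : (0:ℝ) ≤ max (r (n + 1 - k) - G (k - 1)) 0 := le_max_right _ _
    nlinarith
  have Gmono : ∀ j k, j ≤ k → k ≤ n → G j ≤ G k := by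
    intro j k hjk
    induction k, hjk using Nat.le_induction with
    | base => intro _; exact le_rfl
    | succ k hk ih =>
      intro hkn
      have hs := Gstep (k + 1) (by omega) hkn
      simp only [Nat.add_sub_cancel] at hs
      exact le_trans (ih (by omega)) hs
  have hGn0 : 0 ≤ G n := by rw [← hG0]; exact Gmono 0 n (by omega) le_rfl
  -- Main downward induction along the G trajectory
  have T : ∀ d k, 1 ≤ k → k + d = n → G k ≤ H (n - k) →
      G k + H (n - k) ≤ 2 * G n := by
    intro d
    induction d with
    | zero =>
      intro k hk1 hkn _
      rw [show n - k = 0 from by omega, hH0]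
      have : G k ≤ G n := Gmono k n (by omega) le_rfl
      linarith
    | succ d ih =>
      intro k hk1 hkn hle
      have hm : n - k = d + 1 := by omega
      have hk1n : k + 1 ≤ n := by omega
      have hGrec := hG (k + 1) (by omega) hk1n
      rw [show n + 1 - (k + 1) = d + 1 from by omega] at hGrec
      simp only [Nat.add_sub_cancel] at hGrec
      have hHm := hH (d + 1) (by omega) (by omega)
      simp only [Nat.add_sub_cancel] at hHm
      have hHb := key (d + 1) (by omega)
      have hHb' := key d (by omega)
      obtain ⟨ha0, ha1⟩ := hl (d + 1) (by omega) (by omega)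
      rw [hm] at hle ⊢
      have hrm : G k ≤ r (d + 1) := le_trans hle (hHb.2 (by omega))
      have hmax : max (r (d + 1) - G k) 0 = r (d + 1) - G k :=
        max_eq_left (by linarith)
      rw [hmax] at hGrec
      have hHd_r : H d ≤ r (d + 1) := by
        rcases Nat.eq_zero_or_pos d with h0 | h1
        · subst h0; rw [hH0]; exact hr0 1 le_rfl (by omega)
        · exact le_trans (hHb'.2 h1) (hrmono d h1 (by omega))
      have hGk1 : G k ≤ G (k + 1) := by
        nlinarith [mul_nonneg ha0.le (sub_nonneg.2 hrm)]
      rcases le_or_gt (G (k + 1)) (H d) with hc | hc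
      · have hT := ih (k + 1) (by omega) (by omega)
          (by rw [show n - (k + 1) = d from by omega]; exact hc)
        rw [show n - (k + 1) = d from by omega] at hT
        nlinarith [mul_nonneg ha0.le (sub_nonneg.2 (hGk1.trans hc))]
      · -- H d ≤ G (k+1) ≤ G n
        have hGn : G (k + 1) ≤ G n := Gmono (k + 1) n hk1n le_rfl
        nlinarith [mul_nonneg (by linarith : (0:ℝ) ≤ 1 - l (d + 1))
            (by linarith : (0:ℝ) ≤ G (k + 1) - H d),
          mul_nonneg (mul_nonneg ha0.le ha0.le)
            (by linarith : (0:ℝ) ≤ r (d + 1) - G k)]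
  -- Compute G 1 = l n * r n
  obtain ⟨ha0, ha1⟩ := hl n hn le_rfl
  have hrn0 : 0 ≤ r n := hr0 n hn le_rfl
  have hG1 : G 1 = l n * r n := by
    have h := hG 1 le_rfl hn
    rw [show n + 1 - 1 = n from by omega, show (1:ℕ) - 1 = 0 from rfl, hG0,
      sub_zero, max_eq_left hrn0, zero_add] at h
    exact h
  have hHn := hH n hn le_rfl
  have hH' := key (n - 1) (by omega)
  have first : H n ≤ (2 - l n) * G n := by
    rcases le_or_gt (G 1) (H (n - 1)) with hc | hc
    · have hT := T (n - 1) 1 le_rfl (by omega) (by rw [hG1] at hc ⊢; exact hc)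
      rw [hG1] at hT hc
      nlinarith [mul_nonneg ha0.le (by linarith : (0:ℝ) ≤ 2 * G n - l n * r n - H (n - 1)),
        mul_nonneg ha0.le (by linarith : (0:ℝ) ≤ H (n - 1) - l n * r n)]
    · rw [hG1] at hc
      have hx : l n * r n ≤ G n := by rw [← hG1]; exact Gmono 1 n hn le_rfl
      nlinarith [mul_nonneg (by linarith : (0:ℝ) ≤ 2 - l n)
          (by linarith : (0:ℝ) ≤ G n - l n * r n),
        mul_nonneg (by linarith : (0:ℝ) ≤ 1 - l n)
          (by linarith : (0:ℝ) ≤ l n * r n - H (n - 1))]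
  refine ⟨first, ?_⟩
  nlinarith [mul_nonneg ha0.le hGn0]
end

section
/- For every ε ∈ (0,1), there exists a random consideration set instance with two products where the ratio of optimal expected revenues between the reversed preference order and the original preference order equals 2 − ε. Concretely: with λ_1 = ε, λ_2 = 1, r_1 = 1/ε, r_2 = 1, under order 1 ≺ 2 the optimal assortment revenue is max(λ_2 r_2 + (1−λ_2)λ_1 r_1, λ_1 r_1) = 1, while under order 2 ≺ 1 it is λ_1 r_1 + (1−λ_1)λ_2 r_2 = 2 − ε. -/
/-- Tightness of the factor-2 bound for the RCS model. With
`λ_1 = ε, λ_2 = 1, r_1 = 1/ε, r_2 = 1`, the optimal revenue under the order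
`1 ≺ 2` is `max (λ_2 r_2 + (1-λ_2) λ_1 r_1) (λ_1 r_1) = 1`, while under the
reversed order `2 ≺ 1` it is `λ_1 r_1 + (1-λ_1) λ_2 r_2 = 2 - ε`; so the ratio
of the two optimal expected revenues equals `2 - ε`. -/
theorem rcs_tight_example (ε : ℝ) (hε : ε ∈ Set.Ioo (0:ℝ) 1)
    (l₁ l₂ r₁ r₂ : ℝ) (hl₁ : l₁ = ε) (hl₂ : l₂ = 1)
    (hr₁ : r₁ = 1 / ε) (hr₂ : r₂ = 1) :
    max (l₂ * r₂ + (1 - l₂) * l₁ * r₁) (l₁ * r₁) = 1 ∧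
    l₁ * r₁ + (1 - l₁) * l₂ * r₂ = 2 - ε ∧
    (l₁ * r₁ + (1 - l₁) * l₂ * r₂) /
        max (l₂ * r₂ + (1 - l₂) * l₁ * r₁) (l₁ * r₁) = 2 - ε := by
  obtain ⟨h0, h1⟩ := hε
  have hε' : ε ≠ 0 := ne_of_gt h0
  have key : ε * (1 / ε) = 1 := by field_simp
  rw [hl₁, hl₂, hr₁, hr₂, key]
  norm_num
  ring
end

section
/- In the random consideration set model with preference order 1 ≺ 2 ≺ ⋯ ≺ n (product n most preferred), attention probabilities λ_i ∈ (0,1), and revenues r_i ≥ 0, the expected revenue of the full assortment N = {1,…,n} is Σ_{i=1}^n r_i λ_i Π_{j=i+1}^n (1 − λ_j), and this quantity is non-decreasing in each λ_k whenever r_k ≥ Σ_{i=1}^{k−1} r_i λ_i Π_{j=i+1}^{k−1}(1 − λ_j). -/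
open Finset

/-- In the RCS model with preference order `1 ≺ … ≺ n`, the full
assortment earns `∑_i r_i λ_i ∏_{j>i}(1-λ_j)`, and this quantity is
non-decreasing in each attention probability `λ_k` provided
`r_k ≥ ∑_{i<k} r_i λ_i ∏_{i<j<k}(1-λ_j)` (the revenue-to-date `R_{k-1}`).
Monotonicity is expressed by increasing the `k`-th attention probability from
`l k` to `l' k` while keeping the others fixed. -/
theorem rcs_full_assortment_monotone_in_attention (n : ℕ) (r : ℕ → ℝ)
    (hr : ∀ i, 1 ≤ i → i ≤ n → 0 ≤ r i)
    (k : ℕ) (hk1 : 1 ≤ k) (hkn : k ≤ n)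
    (l l' : ℕ → ℝ)
    (hl : ∀ i, 1 ≤ i → i ≤ n → l i ∈ Set.Ioc (0:ℝ) 1)
    (hl' : ∀ i, 1 ≤ i → i ≤ n → l' i ∈ Set.Ioc (0:ℝ) 1)
    (hsame : ∀ i, i ≠ k → l i = l' i) (hinc : l k ≤ l' k)
    (hcond : ∑ i ∈ Icc 1 (k - 1), r i * l i * ∏ j ∈ Icc (i + 1) (k - 1), (1 - l j)
      ≤ r k) :
    ∑ i ∈ Icc 1 n, r i * l i * ∏ j ∈ Icc (i + 1) n, (1 - l j) ≤
      ∑ i ∈ Icc 1 n, r i * l' i * ∏ j ∈ Icc (i + 1) n, (1 - l' j) := by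
  obtain ⟨m, rfl⟩ : ∃ m, k = m + 1 := ⟨k - 1, (Nat.succ_pred_eq_of_pos hk1).symm⟩
  have h1 : ∀ b : ℕ, Icc 1 b = Ioc 0 b := by
    intro b; ext x; simp only [mem_Icc, mem_Ioc]; omega
  have h2 : ∀ a b : ℕ, Icc (a + 1) b = Ioc a b := by
    intro a b; ext x; simp only [mem_Icc, mem_Ioc]; omega
  simp only [Nat.add_sub_cancel, h1, h2] at hcond ⊢
  -- abbreviations
  have hPnn : (0:ℝ) ≤ ∏ j ∈ Ioc (m + 1) n, (1 - l' j) := by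
    apply Finset.prod_nonneg
    intro j hj
    simp only [mem_Ioc] at hj
    have := hl' j (by omega) hj.2
    linarith [this.2]
  have key : ∀ lam : ℕ → ℝ,
      ∑ i ∈ Ioc 0 n, r i * lam i * ∏ j ∈ Ioc i n, (1 - lam j)
      = ((1 - lam (m + 1)) * (∑ i ∈ Ioc 0 m, r i * lam i * ∏ j ∈ Ioc i m, (1 - lam j))
          + lam (m + 1) * r (m + 1)) * (∏ j ∈ Ioc (m + 1) n, (1 - lam j))
        + ∑ i ∈ Ioc (m + 1) n, r i * lam i * ∏ j ∈ Ioc i n, (1 - lam j) := by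
    intro lam
    rw [← Finset.sum_Ioc_consecutive _ (show (0:ℕ) ≤ m + 1 by omega) (show m + 1 ≤ n by omega)]
    rw [Finset.sum_Ioc_succ_top (Nat.zero_le m)]
    congr 1
    have hterm : ∀ i ∈ Ioc 0 m,
        r i * lam i * ∏ j ∈ Ioc i n, (1 - lam j)
        = (1 - lam (m + 1)) * (r i * lam i * ∏ j ∈ Ioc i m, (1 - lam j))
            * ∏ j ∈ Ioc (m + 1) n, (1 - lam j) := by
      intro i hi
      simp only [mem_Ioc] at hi
      rw [← Finset.prod_Ioc_consecutive _ (show i ≤ m + 1 by omega) (show m + 1 ≤ n by omega)]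
      rw [Finset.prod_Ioc_succ_top hi.2]
      ring
    rw [Finset.sum_congr rfl hterm, ← Finset.sum_mul, ← Finset.mul_sum]
    ring
  rw [key l, key l']
  have hSeq : (∑ i ∈ Ioc 0 m, r i * l i * ∏ j ∈ Ioc i m, (1 - l j))
      = ∑ i ∈ Ioc 0 m, r i * l' i * ∏ j ∈ Ioc i m, (1 - l' j) := by
    apply Finset.sum_congr rfl
    intro i hi
    simp only [mem_Ioc] at hi
    rw [hsame i (by omega)]
    congr 1
    apply Finset.prod_congr rfl
    intro j hj
    simp only [mem_Ioc] at hj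
    rw [hsame j (by omega)]
  have hPeq : (∏ j ∈ Ioc (m + 1) n, (1 - l j)) = ∏ j ∈ Ioc (m + 1) n, (1 - l' j) := by
    apply Finset.prod_congr rfl
    intro j hj
    simp only [mem_Ioc] at hj
    rw [hsame j (by omega)]
  have hTeq : (∑ i ∈ Ioc (m + 1) n, r i * l i * ∏ j ∈ Ioc i n, (1 - l j))
      = ∑ i ∈ Ioc (m + 1) n, r i * l' i * ∏ j ∈ Ioc i n, (1 - l' j) := by
    apply Finset.sum_congr rfl
    intro i hi
    simp only [mem_Ioc] at hi
    rw [hsame i (by omega)]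
    congr 1
    apply Finset.prod_congr rfl
    intro j hj
    simp only [mem_Ioc] at hj
    rw [hsame j (by omega)]
  rw [hSeq] at hcond
  rw [hSeq, hPeq, hTeq]
  nlinarith [mul_nonneg (mul_nonneg (sub_nonneg.2 hinc) (sub_nonneg.2 hcond)) hPnn]
end

section
/- For every m ≥ 1 and ε ∈ (0,1), there exists a latent-class choice instance with m segments and m products where refined assortment optimization earns at least m(1−ε) times the traditional assortment optimum. Concretely: segment j (1 ≤ j ≤ m−1) has weight θ_j = ε^{j−1} − ε^j and segment m has weight ε^{m−1}; product j has revenue r_j = ε^{−(j−1)}; in the traditional setting every segment j buys the lowest-index offered product among {1,…,j} (and buys nothing if no product of index ≤ j is offered), so every nonempty assortment S earns exactly Σ_{j ≥ ℓ(S)} θ_j · r_{ℓ(S)} = 1 where ℓ(S) = min S; in the refined setting segment j buys product j whenever offered, so the full assortment earns Σ_{j=1}^m θ_j r_j = (m−1)(1−ε) + 1 ≥ m(1−ε). -/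
open Finset

lemma lcmnl_tail (m : ℕ) (ε : ℝ) (hε0 : ε ≠ 0) (θ : ℕ → ℝ)
    (hθ : ∀ j, 1 ≤ j → j < m → θ j = ε ^ (j - 1) - ε ^ j)
    (hθm : θ m = ε ^ (m - 1)) :
    ∀ n ℓ, m - ℓ = n → 1 ≤ ℓ → ℓ ≤ m → ∑ j ∈ Icc ℓ m, θ j = ε ^ (ℓ - 1) := by
  intro n
  induction n with
  | zero =>
    intro ℓ hn h1 h2
    have : ℓ = m := le_antisymm h2 (by omega)
    subst this
    simp [hθm]
  | succ k ih =>
    intro ℓ hn h1 h2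
    have hlt : ℓ < m := by omega
    have hins : Icc ℓ m = insert ℓ (Icc (ℓ+1) m) := by
      ext x; simp only [Finset.mem_Icc, Finset.mem_insert]; omega
    rw [hins, Finset.sum_insert (by simp)]
    rw [ih (ℓ+1) (by omega) (by omega) (by omega), hθ ℓ h1 hlt]
    have : ℓ - 1 + 1 = ℓ := by omega
    have h2 : (ℓ+1) - 1 = ℓ := by omega
    rw [h2]
    ring

/-- Deterministic core of the tightness construction for the
LC-MNL bound `R̄ ≤ m R*`. -/
theorem lcmnl_tightness_core (m : ℕ) (hm : 1 ≤ m) (ε : ℝ)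
    (hε : ε ∈ Set.Ioo (0:ℝ) 1) (θ r : ℕ → ℝ)
    (hθ : ∀ j, 1 ≤ j → j < m → θ j = ε ^ (j - 1) - ε ^ j)
    (hθm : θ m = ε ^ (m - 1))
    (hr : ∀ j, 1 ≤ j → j ≤ m → r j = (ε ^ (j - 1))⁻¹) :
    (∑ j ∈ Icc 1 m, θ j = 1) ∧
    (∀ S : Finset ℕ, S ⊆ Icc 1 m → ∀ hS : S.Nonempty,
      ∑ j ∈ Icc (S.min' hS) m, θ j * r (S.min' hS) = 1) ∧
    (∑ j ∈ Icc 1 m, θ j * r j = ((m : ℝ) - 1) * (1 - ε) + 1) ∧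
    ((m : ℝ) * (1 - ε) ≤ ∑ j ∈ Icc 1 m, θ j * r j) := by
  obtain ⟨hε0, hε1⟩ := hε
  have hεne : ε ≠ 0 := ne_of_gt hε0
  have tail := lcmnl_tail m ε hεne θ hθ hθm
  have hpow : ∀ k : ℕ, ε ^ k ≠ 0 := fun k => pow_ne_zero k hεne
  have ha : ∑ j ∈ Icc 1 m, θ j = 1 := by
    have := tail (m - 1) 1 (by omega) le_rfl hm
    simpa using this
  have hc : ∑ j ∈ Icc 1 m, θ j * r j = ((m : ℝ) - 1) * (1 - ε) + 1 := by
    obtain ⟨n, rfl⟩ : ∃ n, m = n + 1 := ⟨m - 1, by omega⟩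
    rw [Finset.sum_Icc_succ_top (by omega)]
    have hconst : ∀ j ∈ Icc 1 n, θ j * r j = 1 - ε := by
      intro j hj
      rw [Finset.mem_Icc] at hj
      rw [hθ j hj.1 (by omega), hr j hj.1 (by omega)]
      have hj1 : ε ^ j = ε * ε ^ (j - 1) := by
        rw [← pow_succ']; congr 1; omega
      rw [hj1, sub_mul, mul_inv_cancel₀ (hpow _), mul_assoc,
        mul_inv_cancel₀ (hpow _), mul_one]
    rw [Finset.sum_congr rfl hconst, Finset.sum_const, hθm,
      hr (n+1) (by omega) le_rfl, mul_inv_cancel₀ (hpow _)]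
    simp only [Nat.card_Icc, Nat.add_sub_cancel, nsmul_eq_mul]
    push_cast
    ring
  refine ⟨ha, ?_, hc, ?_⟩
  · intro S hSsub hS
    set ℓ := S.min' hS with hℓ
    have hmem : ℓ ∈ Icc 1 m := hSsub (S.min'_mem hS)
    rw [Finset.mem_Icc] at hmem
    rw [← Finset.sum_mul, tail (m - ℓ) ℓ rfl hmem.1 hmem.2,
      hr ℓ hmem.1 hmem.2, mul_inv_cancel₀ (hpow _)]
  · rw [hc]; nlinarith [hε0.le, hε1.le]
end
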